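/- Let E be an arbitrary directed graph, K a field, L = L_K(E), and v a vertex of E. If the corner vLv is von Neumann regular, then T_E(v) contains no cycles. -/

import Mathlib

/-- A directed graph: vertices, edges, source and target (range) maps. -/
structure DGraph where
  V : Type
  E : Type
  src : E → V
  tgt : E → V

namespace DGraph

/-- There is a (possibly empty) directed path from `u` to `w`. -/
def Reaches (G : DGraph) (u w : G.V) : Prop :=
  Relation.ReflTransGen (fun a b => ∃ e : G.E, G.src e = a ∧ G.tgt e = b) u w

/-- A nonempty list of composable edges, closed, not passing through any vertex twice. -/
def IsCycle (G : DGraph) (p : List G.E) : Prop :=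
  p ≠ [] ∧ List.Chain' (fun e f => G.tgt e = G.src f) p ∧
    p.getLast?.map G.tgt = p.head?.map G.src ∧ (p.map G.src).Nodup

/-- The preorder on cycles: `c ≥ c'` iff some vertex of `c` reaches some vertex of `c'`. -/
def CycleGe (G : DGraph) (c c' : List G.E) : Prop :=
  ∃ u w : G.V, u ∈ c.map G.src ∧ w ∈ c'.map G.src ∧ G.Reaches u w

/-- Two cycles are the same cycle iff one is a rotation of the other. -/
def IsRotation (G : DGraph) (c c' : List G.E) : Prop :=
  ∃ n : ℕ, c' = c.rotate n

/-- An infinite path, as a coherent sequence of edges. -/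
def IsInfPath (G : DGraph) (p : ℕ → G.E) : Prop :=
  ∀ n : ℕ, G.tgt (p n) = G.src (p (n + 1))

/-- A rational infinite path: `g g g ⋯` for a (finite, nonempty, closed) path `g`. -/
def IsRational (G : DGraph) (q : ℕ → G.E) : Prop :=
  ∃ (g : List G.E) (hg : g ≠ []),
    List.Chain' (fun e f => G.tgt e = G.src f) g ∧
    g.getLast?.map G.tgt = g.head?.map G.src ∧
    ∀ k : ℕ, q k = g.get ⟨k % g.length, Nat.mod_lt _ (List.length_pos_iff.mpr hg)⟩

/-- Tail equivalence of infinite paths. -/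
def TailEquiv (G : DGraph) (p q : ℕ → G.E) : Prop :=
  ∃ m n : ℕ, ∀ k : ℕ, p (m + k) = q (n + k)

end DGraph

/-- Generators of the Leavitt path algebra: vertices, edges (real), ghost edges. -/
inductive LPAGen (G : DGraph) : Type
  | vertex : G.V → LPAGen G
  | edge : G.E → LPAGen G
  | ghost : G.E → LPAGen G

open Classical in
/-- The defining relations of the Leavitt path algebra `L_K(E)`: the vertices are pairwise
orthogonal idempotents, `s(e)e = e = e r(e)`, `r(e)e* = e* = e* s(e)`, the (CK-1)
relations `e* f = δ_{e,f} r(e)`, and the (CK-2) relations `v = ∑_{s(e)=v} e e*` for every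
regular vertex `v`. -/
inductive LPARel (K : Type) [Field K] (G : DGraph) :
    FreeAlgebra K (LPAGen G) → FreeAlgebra K (LPAGen G) → Prop
  | vtx (u v : G.V) :
      LPARel K G (FreeAlgebra.ι K (LPAGen.vertex u) * FreeAlgebra.ι K (LPAGen.vertex v))
        (if u = v then FreeAlgebra.ι K (LPAGen.vertex u) else 0)
  | src_edge (e : G.E) :
      LPARel K G (FreeAlgebra.ι K (LPAGen.vertex (G.src e)) * FreeAlgebra.ι K (LPAGen.edge e))
        (FreeAlgebra.ι K (LPAGen.edge e))
  | edge_tgt (e : G.E) :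
      LPARel K G (FreeAlgebra.ι K (LPAGen.edge e) * FreeAlgebra.ι K (LPAGen.vertex (G.tgt e)))
        (FreeAlgebra.ι K (LPAGen.edge e))
  | tgt_ghost (e : G.E) :
      LPARel K G (FreeAlgebra.ι K (LPAGen.vertex (G.tgt e)) * FreeAlgebra.ι K (LPAGen.ghost e))
        (FreeAlgebra.ι K (LPAGen.ghost e))
  | ghost_src (e : G.E) :
      LPARel K G (FreeAlgebra.ι K (LPAGen.ghost e) * FreeAlgebra.ι K (LPAGen.vertex (G.src e)))
        (FreeAlgebra.ι K (LPAGen.ghost e))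
  | ck1 (e f : G.E) :
      LPARel K G (FreeAlgebra.ι K (LPAGen.ghost e) * FreeAlgebra.ι K (LPAGen.edge f))
        (if e = f then FreeAlgebra.ι K (LPAGen.vertex (G.tgt e)) else 0)
  | ck2 (v : G.V) (hfin : {e : G.E | G.src e = v}.Finite)
      (hne : {e : G.E | G.src e = v}.Nonempty) :
      LPARel K G (FreeAlgebra.ι K (LPAGen.vertex v))
        (∑ e ∈ hfin.toFinset,
          FreeAlgebra.ι K (LPAGen.edge e) * FreeAlgebra.ι K (LPAGen.ghost e))

/-- The Leavitt path algebra of the graph `G` over the field `K`. -/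
abbrev LPA (K : Type) [Field K] (G : DGraph) := RingQuot (LPARel K G)

/-- The image of a vertex `v` in the Leavitt path algebra. -/
noncomputable def lpaVtx (K : Type) [Field K] (G : DGraph) (v : G.V) : LPA K G :=
  RingQuot.mkRingHom (LPARel K G) (FreeAlgebra.ι K (LPAGen.vertex v))


-- ===== auxiliary development =====
noncomputable section Stmt13Aux

namespace Stmt13

variable (K : Type) [Field K] (G : DGraph)
abbrev mk : FreeAlgebra K (LPAGen G) →ₐ[K] LPA K G := RingQuot.mkAlgHom K (LPARel K G)

def vtx (w : G.V) : LPA K G := mk K G (FreeAlgebra.ι K (LPAGen.vertex w))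
def edg (e : G.E) : LPA K G := mk K G (FreeAlgebra.ι K (LPAGen.edge e))
def gho (e : G.E) : LPA K G := mk K G (FreeAlgebra.ι K (LPAGen.ghost e))

theorem lpaVtx_eq (w : G.V) : lpaVtx K G w = vtx K G w := by
  rw [vtx, lpaVtx, ← RingQuot.mkAlgHom_coe K]
  rfl

variable {K G}
open scoped Classical

theorem rel {x y : FreeAlgebra K (LPAGen G)} (h : LPARel K G x y) :
    mk K G x = mk K G y := RingQuot.mkAlgHom_rel K h

theorem vtx_mul_vtx (u w : G.V) :
    vtx K G u * vtx K G w = if u = w then vtx K G u else 0 := by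
  rw [vtx, vtx, ← map_mul, rel (LPARel.vtx u w)]
  split_ifs with h
  · simp [vtx]
  · simp [if_neg h]

theorem vtx_idem (u : G.V) : vtx K G u * vtx K G u = vtx K G u := by
  rw [vtx_mul_vtx, if_pos rfl]

theorem src_mul_edg (e : G.E) : vtx K G (G.src e) * edg K G e = edg K G e := by
  rw [vtx, edg, ← map_mul, rel (LPARel.src_edge e)]

theorem edg_mul_tgt (e : G.E) : edg K G e * vtx K G (G.tgt e) = edg K G e := by
  rw [vtx, edg, ← map_mul, rel (LPARel.edge_tgt e)]

theorem tgt_mul_gho (e : G.E) : vtx K G (G.tgt e) * gho K G e = gho K G e := by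
  rw [vtx, gho, ← map_mul, rel (LPARel.tgt_ghost e)]

theorem gho_mul_src (e : G.E) : gho K G e * vtx K G (G.src e) = gho K G e := by
  rw [vtx, gho, ← map_mul, rel (LPARel.ghost_src e)]

theorem gho_mul_edg (e f : G.E) :
    gho K G e * edg K G f = if e = f then vtx K G (G.tgt e) else 0 := by
  rw [gho, edg, ← map_mul, rel (LPARel.ck1 e f)]
  split_ifs with h
  · simp [vtx]
  · simp [if_neg h]

theorem ck2_rel (w : G.V) (hfin : {e : G.E | G.src e = w}.Finite)
    (hne : {e : G.E | G.src e = w}.Nonempty) :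
    vtx K G w = ∑ e ∈ hfin.toFinset, edg K G e * gho K G e := by
  rw [vtx, rel (LPARel.ck2 w hfin hne), map_sum]
  simp [edg, gho]

end Stmt13
-- ===== paths =====

inductive GPath (G : DGraph) : G.V → G.V → Type
  | nil (w : G.V) : GPath G w w
  | cons (e : G.E) {b : G.V} (p : GPath G (G.tgt e) b) : GPath G (G.src e) b

namespace GPath

variable {G : DGraph}

def length : ∀ {a b : G.V}, GPath G a b → ℕ
  | _, _, .nil _ => 0
  | _, _, .cons _ p => p.length + 1

def castSrc {a a' b : G.V} (h : a = a') (p : GPath G a b) : GPath G a' b := h ▸ p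
def castTgt {a b b' : G.V} (h : b = b') (p : GPath G a b) : GPath G a b' := h ▸ p

@[simp] theorem length_castSrc {a a' b : G.V} (h : a = a') (p : GPath G a b) :
    (castSrc h p).length = p.length := by subst h; rfl
@[simp] theorem length_castTgt {a b b' : G.V} (h : b = b') (p : GPath G a b) :
    (castTgt h p).length = p.length := by subst h; rfl

end GPath

namespace Stmt13

variable {K : Type} [Field K] {G : DGraph}

def pe : ∀ {a b : G.V}, GPath G a b → LPA K G
  | _, _, .nil w => vtx K G w
  | _, _, .cons e p => edg K G e * pe p

def pg : ∀ {a b : G.V}, GPath G a b → LPA K G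
  | _, _, .nil w => vtx K G w
  | _, _, .cons e p => pg p * gho K G e

@[simp] theorem pe_castSrc {a a' b : G.V} (h : a = a') (p : GPath G a b) :
    pe (K := K) (p.castSrc h) = pe p := by subst h; rfl
@[simp] theorem pe_castTgt {a b b' : G.V} (h : b = b') (p : GPath G a b) :
    pe (K := K) (p.castTgt h) = pe p := by subst h; rfl
@[simp] theorem pg_castSrc {a a' b : G.V} (h : a = a') (p : GPath G a b) :
    pg (K := K) (p.castSrc h) = pg p := by subst h; rfl
@[simp] theorem pg_castTgt {a b b' : G.V} (h : b = b') (p : GPath G a b) :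
    pg (K := K) (p.castTgt h) = pg p := by subst h; rfl

theorem vtx_mul_pe : ∀ {a b : G.V} (p : GPath G a b), vtx K G a * pe p = pe p
  | _, _, .nil w => vtx_idem w
  | _, _, .cons e p => by rw [pe, ← mul_assoc, src_mul_edg]

theorem pe_mul_vtx : ∀ {a b : G.V} (p : GPath G a b), pe p * vtx K G b = pe p
  | _, _, .nil w => vtx_idem w
  | _, _, .cons e p => by rw [pe, mul_assoc, pe_mul_vtx p]

theorem vtx_mul_pg : ∀ {a b : G.V} (p : GPath G a b), vtx K G b * pg p = pg p
  | _, _, .nil w => vtx_idem w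
  | _, _, .cons e p => by rw [pg, ← mul_assoc, vtx_mul_pg p]

theorem pg_mul_vtx : ∀ {a b : G.V} (p : GPath G a b), pg p * vtx K G a = pg p
  | _, _, .nil w => vtx_idem w
  | _, _, .cons e p => by rw [pg, mul_assoc, gho_mul_src]

theorem pg_mul_pe : ∀ {a b : G.V} (p : GPath G a b), pg p * pe p = vtx K G b
  | _, _, .nil w => vtx_idem w
  | _, _, .cons e p => by
      rw [pg, pe, mul_assoc, ← mul_assoc (gho K G e), gho_mul_edg, if_pos rfl,
        vtx_mul_pe p, pg_mul_pe p]

theorem pe_pow_mul_vtx {w : G.V} (c : GPath G w w) (k : ℕ) :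
    (pe c : LPA K G) ^ (k + 1) * vtx K G w = pe c ^ (k + 1) := by
  rw [pow_succ, mul_assoc, pe_mul_vtx]

theorem vtx_mul_pe_pow {w : G.V} (c : GPath G w w) (k : ℕ) :
    vtx K G w * (pe c : LPA K G) ^ (k + 1) = pe c ^ (k + 1) := by
  rw [pow_succ', ← mul_assoc, vtx_mul_pe]

theorem pg_pow_mul_pe_pow {w : G.V} (c : GPath G w w) (k : ℕ) :
    (pg c : LPA K G) ^ (k + 1) * pe c ^ (k + 1) = vtx K G w := by
  induction k with
  | zero => simpa using pg_mul_pe c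
  | succ k ih =>
      rw [pow_succ (pg c), pow_succ' (pe c), mul_assoc, ← mul_assoc (pg c),
        pg_mul_pe c, vtx_mul_pe_pow, ih]

-- list → path
def listToPath : ∀ (e : G.E) (l : List G.E),
    List.Chain (fun a b => G.tgt a = G.src b) e l →
    GPath G (G.src e) (G.tgt (l.getLastD e))
  | e, [], _ => GPath.cons e (GPath.nil (G.tgt e))
  | e, f :: l, h =>
      (GPath.cons e ((listToPath f l (List.chain_cons.mp h).2).castSrc
        (List.chain_cons.mp h).1.symm)).castTgt
        (congrArg G.tgt (List.getLastD_cons (a := e) (b := f) (l := l)).symm)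

theorem listToPath_length (e : G.E) (l : List G.E) (h) :
    (listToPath (G := G) e l h).length = l.length + 1 := by
  induction l generalizing e with
  | nil => rfl
  | cons f l ih => simp [listToPath, GPath.length]; exact ih _ _

theorem reaches_nonempty_path {a b : G.V} (h : G.Reaches a b) : Nonempty (GPath G a b) := by
  induction h using Relation.ReflTransGen.head_induction_on with
  | refl => exact ⟨GPath.nil b⟩
  | head step _ ih =>
      obtain ⟨e, he, ht⟩ := step
      obtain ⟨p⟩ := ih
      subst he; subst ht
      exact ⟨GPath.cons e p⟩

end Stmt13
-- ===== grading =====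
namespace Stmt13

variable (K : Type) [Field K] (G : DGraph)

abbrev GrA := AddMonoidAlgebra (LPA K G) ℤ

abbrev sg (n : ℤ) (x : LPA K G) : GrA K G := AddMonoidAlgebra.single n x

def gradePre : FreeAlgebra K (LPAGen G) →ₐ[K] GrA K G :=
  FreeAlgebra.lift K fun g => match g with
    | .vertex w => sg K G 0 (vtx K G w)
    | .edge e => sg K G 1 (edg K G e)
    | .ghost e => sg K G (-1) (gho K G e)

open scoped Classical in
theorem gradePre_rel : ∀ ⦃x y : FreeAlgebra K (LPAGen G)⦄, LPARel K G x y →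
    gradePre K G x = gradePre K G y := by
  intro x y h
  cases h with
  | vtx u w =>
      simp only [map_mul, gradePre, FreeAlgebra.lift_ι_apply]
      rw [AddMonoidAlgebra.single_mul_single, vtx_mul_vtx]
      split_ifs with h
      · simp [sg, FreeAlgebra.lift_ι_apply]
      · simp
  | src_edge e =>
      simp only [map_mul, gradePre, FreeAlgebra.lift_ι_apply]
      rw [AddMonoidAlgebra.single_mul_single, src_mul_edg]
      norm_num
  | edge_tgt e =>
      simp only [map_mul, gradePre, FreeAlgebra.lift_ι_apply]
      rw [AddMonoidAlgebra.single_mul_single, edg_mul_tgt]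
      norm_num
  | tgt_ghost e =>
      simp only [map_mul, gradePre, FreeAlgebra.lift_ι_apply]
      rw [AddMonoidAlgebra.single_mul_single, tgt_mul_gho]
      norm_num
  | ghost_src e =>
      simp only [map_mul, gradePre, FreeAlgebra.lift_ι_apply]
      rw [AddMonoidAlgebra.single_mul_single, gho_mul_src]
      norm_num
  | ck1 e f =>
      simp only [map_mul, gradePre, FreeAlgebra.lift_ι_apply]
      rw [AddMonoidAlgebra.single_mul_single, gho_mul_edg]
      split_ifs with h
      · simp [sg, FreeAlgebra.lift_ι_apply]
      · simp
  | ck2 w hfin hne =>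
      simp only [map_sum, map_mul, gradePre, FreeAlgebra.lift_ι_apply]
      have : ∀ e ∈ hfin.toFinset,
          sg K G 1 (edg K G e) * sg K G (-1) (gho K G e)
            = sg K G 0 (edg K G e * gho K G e) := by
        intro e _
        rw [AddMonoidAlgebra.single_mul_single]
        norm_num
      rw [Finset.sum_congr rfl this]
      show sg K G 0 (vtx K G w) = _
      unfold sg
      rw [ck2_rel w hfin hne]; exact map_sum (AddMonoidAlgebra.singleAddHom 0) _ _

end Stmt13
namespace Stmt13

variable (K : Type) [Field K] (G : DGraph)

def Phi : LPA K G →ₐ[K] GrA K G :=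
  RingQuot.liftAlgHom K ⟨gradePre K G, gradePre_rel K G⟩

variable {K G}

@[simp] theorem Phi_vtx (w : G.V) : Phi K G (vtx K G w) = sg K G 0 (vtx K G w) := by
  rw [vtx, Phi, RingQuot.liftAlgHom_mkAlgHom_apply, gradePre, FreeAlgebra.lift_ι_apply]
  rfl

@[simp] theorem Phi_edg (e : G.E) : Phi K G (edg K G e) = sg K G 1 (edg K G e) := by
  rw [edg, Phi, RingQuot.liftAlgHom_mkAlgHom_apply, gradePre, FreeAlgebra.lift_ι_apply]
  rfl

@[simp] theorem Phi_gho (e : G.E) : Phi K G (gho K G e) = sg K G (-1) (gho K G e) := by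
  rw [gho, Phi, RingQuot.liftAlgHom_mkAlgHom_apply, gradePre, FreeAlgebra.lift_ι_apply]
  rfl

variable (K G)

def eps : GrA K G →+* LPA K G :=
  AddMonoidAlgebra.liftNCRingHom (RingHom.id (LPA K G)) 1 (fun _ _ => Commute.one_right _)

variable {K G}

@[simp] theorem eps_single (n : ℤ) (x : LPA K G) : eps K G (sg K G n x) = x := by
  show AddMonoidAlgebra.liftNC ((RingHom.id (LPA K G)) : LPA K G →+ LPA K G)
    (⇑(1 : Multiplicative ℤ →* LPA K G)) (AddMonoidAlgebra.single n x) = x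
  rw [AddMonoidAlgebra.liftNC_single]
  simp

theorem eps_Phi (z : LPA K G) : eps K G (Phi K G z) = z := by
  obtain ⟨y, rfl⟩ := RingQuot.mkAlgHom_surjective K (LPARel K G) z
  induction y using FreeAlgebra.induction with
  | grade0 r =>
      rw [AlgHom.commutes, AlgHom.commutes]
      have : algebraMap K (GrA K G) r = sg K G 0 (algebraMap K (LPA K G) r) := by
        rw [AddMonoidAlgebra.coe_algebraMap]; rfl
      rw [this, eps_single]
  | grade1 g =>
      cases g with
      | vertex w => rw [show (RingQuot.mkAlgHom K (LPARel K G)) (FreeAlgebra.ι K (LPAGen.vertex w)) = vtx K G w from rfl, Phi_vtx, eps_single]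
      | edge e => rw [show (RingQuot.mkAlgHom K (LPARel K G)) (FreeAlgebra.ι K (LPAGen.edge e)) = edg K G e from rfl, Phi_edg, eps_single]
      | ghost e => rw [show (RingQuot.mkAlgHom K (LPARel K G)) (FreeAlgebra.ι K (LPAGen.ghost e)) = gho K G e from rfl, Phi_gho, eps_single]
  | mul a b ha hb => rw [map_mul, map_mul, map_mul, ha, hb]
  | add a b ha hb => rw [map_add, map_add, map_add, ha, hb]

theorem Phi_eq_zero {z : LPA K G} (h : Phi K G z = 0) : z = 0 := by
  have := eps_Phi z
  rw [h, map_zero] at this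
  exact this.symm

theorem Phi_pe : ∀ {a b : G.V} (p : GPath G a b),
    Phi K G (pe p) = sg K G (p.length : ℤ) (pe p)
  | _, _, .nil w => by simp [pe, GPath.length]
  | _, _, .cons e p => by
      rw [pe, map_mul, Phi_edg, Phi_pe p]
      unfold sg
      rw [AddMonoidAlgebra.single_mul_single]
      have h : (((GPath.cons e p).length : ℕ) : ℤ) = 1 + (p.length : ℤ) := by
        simp [GPath.length]; ring
      rw [h]

theorem Phi_pg : ∀ {a b : G.V} (p : GPath G a b),
    Phi K G (pg p) = sg K G (-(p.length : ℤ)) (pg p)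
  | _, _, .nil w => by simp [pg, GPath.length]
  | _, _, .cons e p => by
      rw [pg, map_mul, Phi_gho, Phi_pg p]
      unfold sg
      rw [AddMonoidAlgebra.single_mul_single]
      have h : -(((GPath.cons e p).length : ℕ) : ℤ) = -(p.length : ℤ) + -1 := by
        simp [GPath.length]; ring
      rw [h]

end Stmt13
namespace Stmt13

variable (K : Type) [Field K] (G : DGraph)

/-- The space of infinite paths in `G`. -/
def XP := {x : G.V × (ℕ → G.E) // G.src (x.2 0) = x.1 ∧ ∀ n, G.tgt (x.2 n) = G.src (x.2 (n+1))}

abbrev MM := XP G →₀ K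

variable {G}

def shiftX (x : XP G) : XP G :=
  ⟨(G.tgt (x.1.2 0), fun n => x.1.2 (n+1)), (x.2.2 0).symm, fun n => x.2.2 (n+1)⟩

def consX (e : G.E) (x : XP G) (h : x.1.1 = G.tgt e) : XP G :=
  ⟨(G.src e, fun n => Nat.rec e (fun k _ => x.1.2 k) n), rfl, by
    intro n
    cases n with
    | zero => show G.tgt e = G.src (x.1.2 0); rw [x.2.1, h]
    | succ n => exact x.2.2 n⟩

variable {K}

def liftX (f : XP G → MM K G) : Module.End K (MM K G) := Finsupp.lift (MM K G) K (XP G) f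

theorem liftX_single (f : XP G → MM K G) (x : XP G) :
    liftX f (Finsupp.single x 1) = f x := by
  rw [liftX]
  simp

theorem endExt {f g : Module.End K (MM K G)}
    (h : ∀ x : XP G, f (Finsupp.single x 1) = g (Finsupp.single x 1)) : f = g := by
  apply Finsupp.lhom_ext
  intro a b
  have hb : (Finsupp.single a b : MM K G) = b • Finsupp.single a 1 := by
    rw [Finsupp.smul_single, smul_eq_mul, mul_one]
  rw [hb, map_smul, map_smul, h]

variable (K)
open scoped Classical in
def pEnd (w : G.V) : Module.End K (MM K G) :=
  liftX fun x => if x.1.1 = w then Finsupp.single x 1 else 0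

open scoped Classical in
def sEnd (e : G.E) : Module.End K (MM K G) :=
  liftX fun x => if h : x.1.1 = G.tgt e then Finsupp.single (consX e x h) 1 else 0

open scoped Classical in
def gEnd (e : G.E) : Module.End K (MM K G) :=
  liftX fun x => if x.1.2 0 = e then Finsupp.single (shiftX x) 1 else 0

variable {K}
open scoped Classical

theorem pEnd_single (w : G.V) (x : XP G) :
    pEnd K w (Finsupp.single x (1:K)) = if x.1.1 = w then Finsupp.single x 1 else 0 :=
  liftX_single _ _

theorem sEnd_single (e : G.E) (x : XP G) :
    sEnd K e (Finsupp.single x (1:K)) =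
      if h : x.1.1 = G.tgt e then Finsupp.single (consX e x h) 1 else 0 :=
  liftX_single _ _

theorem gEnd_single (e : G.E) (x : XP G) :
    gEnd K e (Finsupp.single x (1:K)) =
      if x.1.2 0 = e then Finsupp.single (shiftX x) 1 else 0 :=
  liftX_single _ _

variable (K G)

def repPre : FreeAlgebra K (LPAGen G) →ₐ[K] Module.End K (MM K G) :=
  FreeAlgebra.lift K fun g => match g with
    | .vertex w => pEnd K w
    | .edge e => sEnd K e
    | .ghost e => gEnd K e

theorem repPre_rel : ∀ ⦃x y : FreeAlgebra K (LPAGen G)⦄, LPARel K G x y →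
    repPre K G x = repPre K G y := by
  intro x y h
  cases h with
  | vtx u w =>
      simp only [map_mul, repPre, FreeAlgebra.lift_ι_apply]
      have : pEnd K (G := G) u * pEnd K w = if u = w then pEnd K u else 0 := by
        apply endExt
        intro x
        rw [Module.End.mul_apply, pEnd_single]
        split_ifs with h1 h2 h2
        · rfl
        · rw [pEnd_single, if_neg (fun hh => h2 (hh.symm.trans h1))]
          simp
        · rw [map_zero, pEnd_single, if_neg (fun hh => h1 (hh.trans h2))]
        · rw [map_zero]
          simp
      rw [this]
      split_ifs <;> simp [repPre, FreeAlgebra.lift_ι_apply]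
  | src_edge e =>
      simp only [map_mul, repPre, FreeAlgebra.lift_ι_apply]
      apply endExt
      intro x
      rw [Module.End.mul_apply, sEnd_single]
      split_ifs with h1
      · rw [pEnd_single]
        simp [consX]
      · simp
  | edge_tgt e =>
      simp only [map_mul, repPre, FreeAlgebra.lift_ι_apply]
      apply endExt
      intro x
      rw [Module.End.mul_apply, pEnd_single, sEnd_single]
      split_ifs with h1 <;> simp [sEnd_single, h1, map_zero]
  | tgt_ghost e =>
      simp only [map_mul, repPre, FreeAlgebra.lift_ι_apply]
      apply endExt
      intro x
      rw [Module.End.mul_apply, gEnd_single]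
      split_ifs with h1
      · rw [pEnd_single]
        simp [shiftX, h1]
      · simp
  | ghost_src e =>
      simp only [map_mul, repPre, FreeAlgebra.lift_ι_apply]
      apply endExt
      intro x
      rw [Module.End.mul_apply, pEnd_single]
      by_cases h1 : (x.1).1 = G.src e
      · rw [if_pos h1]
      · rw [if_neg h1, map_zero, gEnd_single,
          if_neg (fun hh => h1 (by rw [← x.2.1, hh]))]
  | ck1 e f =>
      simp only [map_mul, repPre, FreeAlgebra.lift_ι_apply]
      have : gEnd K (G := G) e * sEnd K f = if e = f then pEnd K (G.tgt e) else 0 := by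
        apply endExt
        intro x
        rw [Module.End.mul_apply, sEnd_single]
        split_ifs with h1 h2 h2
        · -- x.1.1 = tgt f, e = f
          subst h2
          rw [gEnd_single]
          have hc : (consX e x h1).1.2 0 = e := rfl
          rw [if_pos hc, pEnd_single, if_pos h1]
          congr 1
          apply Subtype.ext
          apply Prod.ext
          · show G.tgt e = x.1.1; rw [h1]
          · rfl
        · -- x.1.1 = tgt f, e ≠ f
          rw [gEnd_single]
          have hc : (consX f x h1).1.2 0 = f := rfl
          rw [if_neg (by rw [hc]; exact fun hh => h2 hh.symm)]
          simp
        · -- x.1.1 ≠ tgt f, e = f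
          subst h2
          rw [map_zero, pEnd_single, if_neg (fun hh => h1 hh)]
        · rw [map_zero]; rfl
      rw [this]
      split_ifs <;> simp [repPre, FreeAlgebra.lift_ι_apply]
  | ck2 w hfin hne =>
      simp only [map_sum, map_mul, repPre, FreeAlgebra.lift_ι_apply]
      apply endExt
      intro x
      rw [LinearMap.sum_apply, pEnd_single]
      have hterm : ∀ e ∈ hfin.toFinset,
          (sEnd K e * gEnd K e) (Finsupp.single x (1:K)) =
            if x.1.2 0 = e then Finsupp.single x 1 else 0 := by
        intro e _
        rw [Module.End.mul_apply, gEnd_single]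
        split_ifs with h1
        · rw [sEnd_single]
          have hb : (shiftX x).1.1 = G.tgt e := by rw [← h1]; rfl
          rw [dif_pos hb]
          congr 1
          apply Subtype.ext
          apply Prod.ext
          · show G.src e = x.1.1; rw [← h1, x.2.1]
          · funext n
            cases n with
            | zero => exact h1.symm
            | succ n => rfl
        · rw [map_zero]
      rw [Finset.sum_congr rfl hterm, Finset.sum_ite_eq]
      have hmem : x.1.2 0 ∈ hfin.toFinset ↔ x.1.1 = w := by
        rw [Set.Finite.mem_toFinset, Set.mem_setOf_eq, x.2.1]
      split_ifs with h1 h2 h2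
      · rfl
      · exact absurd (hmem.mpr h1) h2
      · exact absurd (hmem.mp h2) h1
      · rfl

def rep : LPA K G →ₐ[K] Module.End K (MM K G) :=
  RingQuot.liftAlgHom K ⟨repPre K G, repPre_rel K G⟩

variable {K G}

theorem vtx_ne_zero (w : G.V) (x : XP G) (hx : x.1.1 = w) : vtx K G w ≠ 0 := by
  intro h0
  have h1 : rep K G (vtx K G w) = pEnd K w := by
    rw [vtx, rep, RingQuot.liftAlgHom_mkAlgHom_apply, repPre, FreeAlgebra.lift_ι_apply]
  have h2 : pEnd K (G := G) w (Finsupp.single x 1) = Finsupp.single x 1 := by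
    rw [pEnd_single, if_pos hx]
  rw [← h1, h0, map_zero] at h2
  exact one_ne_zero (α := K) (Finsupp.single_eq_zero.mp h2.symm)

end Stmt13
namespace Stmt13

variable {K : Type} [Field K] {G : DGraph}

theorem getLast?_cons_eq (l : List G.E) (e : G.E) :
    (e :: l).getLast? = some (l.getLastD e) := by
  induction l generalizing e with
  | nil => rfl
  | cons f l ih => rw [List.getLast?_cons_cons, ih, List.getLastD_cons]

/-- From the cycle data we extract: a base vertex `w'`, a closed path at `w'` of
positive length, an infinite path based at `w'`, and reachability of `w'`
from any vertex of the cycle. -/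
theorem cycle_package (c : List G.E) (hne : c ≠ [])
    (hch : List.Chain' (fun a b => G.tgt a = G.src b) c)
    (hcl : c.getLast?.map G.tgt = c.head?.map G.src) (w : G.V)
    (hw : w ∈ c.map G.src) :
    ∃ w' : G.V, (∃ cyc : GPath G w' w', 1 ≤ cyc.length) ∧
      (∃ x : XP G, x.1.1 = w') ∧ G.Reaches w w' := by
  classical
  obtain ⟨e, l, rfl⟩ : ∃ e l, c = e :: l := by
    cases c with
    | nil => exact absurd rfl hne
    | cons e l => exact ⟨e, l, rfl⟩
  set w' := G.src e with hw'
  have hchain : List.Chain (fun a b => G.tgt a = G.src b) e l := hch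
  have hclosed : G.tgt (l.getLastD e) = w' := by
    rw [getLast?_cons_eq] at hcl
    simpa using hcl
  set L := e :: l with hL
  set N := L.length with hN
  have hN0 : 0 < N := by simp [hN, hL]
  -- the closed path
  have hcycpath : ∃ cyc : GPath G w' w', 1 ≤ cyc.length := by
    refine ⟨(listToPath e l hchain).castTgt hclosed, ?_⟩
    rw [GPath.length_castTgt, listToPath_length]
    omega
  -- chain in terms of get
  have hget : ∀ (i : ℕ) (h : i + 1 < N), G.tgt (L.get ⟨i, by omega⟩)
      = G.src (L.get ⟨i + 1, by omega⟩) := by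
    intro i h
    exact List.isChain_iff_getElem.mp hch i (by omega)
  have hlast : G.tgt (L.get ⟨N - 1, by omega⟩) = w' := by
    have h1 : L.getLast (by simp [hL]) = L.get ⟨N - 1, by omega⟩ := by
      rw [List.getLast_eq_getElem]
      rfl
    have h2 : L.getLast? = some (L.getLast (by simp [hL])) :=
      List.getLast?_eq_getLast_of_ne_nil _
    rw [h2] at hcl
    simp only [hL, List.head?_cons, Option.map_some] at hcl
    rw [← h1]
    exact Option.some.inj hcl
  have hmod : ∀ m : ℕ, (m + 1) % N = (m % N + 1) % N := by
    intro m
    conv_lhs => rw [← Nat.mod_add_div m N]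
    rw [show m % N + N * (m / N) + 1 = m % N + 1 + N * (m / N) by ring,
      Nat.add_mul_mod_self_left]
  have key : ∀ (j : ℕ) (hj : j < N), G.tgt (L.get ⟨j, hj⟩)
      = G.src (L.get ⟨(j + 1) % N, Nat.mod_lt _ hN0⟩) := by
    intro j hj
    by_cases hj1 : j + 1 < N
    · have h2 : (j + 1) % N = j + 1 := Nat.mod_eq_of_lt hj1
      simp only [h2]
      exact hget j hj1
    · have hj2 : j = N - 1 := by omega
      have h2 : (j + 1) % N = 0 := by
        rw [show j + 1 = N by omega, Nat.mod_self]
      simp only [h2]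
      subst hj2
      rw [hlast]
      rfl
  have getCongr : ∀ (a b : ℕ) (ha : a < N) (hb : b < N), a = b →
      L.get ⟨a, ha⟩ = L.get ⟨b, hb⟩ := by
    intro a b ha hb h
    subst h
    rfl
  -- the infinite path
  have hxp : ∃ x : XP G, x.1.1 = w' := by
    refine ⟨⟨(w', fun m => L.get ⟨m % N, Nat.mod_lt _ hN0⟩), ?_, ?_⟩, rfl⟩
    · show G.src (L.get ⟨0 % N, Nat.mod_lt _ hN0⟩) = w'
      rw [getCongr (0 % N) 0 (Nat.mod_lt _ hN0) (by omega) (Nat.zero_mod N)]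
      rfl
    · intro m
      show G.tgt (L.get ⟨m % N, Nat.mod_lt _ hN0⟩)
          = G.src (L.get ⟨(m + 1) % N, Nat.mod_lt _ hN0⟩)
      rw [getCongr ((m + 1) % N) ((m % N + 1) % N) (Nat.mod_lt _ hN0)
        (Nat.mod_lt _ hN0) (hmod m)]
      exact key (m % N) (Nat.mod_lt _ hN0)
  -- reachability
  have reach : ∀ (d i : ℕ) (hi : i < N), N - i ≤ d →
      G.Reaches (G.src (L.get ⟨i, hi⟩)) w' := by
    intro d
    induction d with
    | zero => intro i hi h; omega
    | succ d ih =>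
        intro i hi h
        have step : (fun a b => ∃ e : G.E, G.src e = a ∧ G.tgt e = b)
            (G.src (L.get ⟨i, hi⟩)) (G.tgt (L.get ⟨i, hi⟩)) :=
          ⟨L.get ⟨i, hi⟩, rfl, rfl⟩
        by_cases h1 : i + 1 < N
        · refine Relation.ReflTransGen.head step ?_
          rw [hget i h1]
          exact ih (i + 1) h1 (by omega)
        · have hi2 : i = N - 1 := by omega
          subst hi2
          have h2 := Relation.ReflTransGen.single
            (r := fun a b => ∃ e : G.E, G.src e = a ∧ G.tgt e = b) step
          rwa [hlast] at h2
  obtain ⟨a, ha, rfl⟩ : ∃ a, a ∈ L ∧ G.src a = w := by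
    simpa using hw
  obtain ⟨i, hi⟩ := List.mem_iff_get.mp ha
  refine ⟨w', hcycpath, hxp, ?_⟩
  rw [← hi]
  exact reach N i.1 i.2 (by omega)

end Stmt13
namespace Stmt13

variable {K : Type} [Field K] {G : DGraph}

theorem main_contra {v w' : G.V} (p : GPath G v w') (cyc : GPath G w' w')
    (hlen : 1 ≤ cyc.length) (hw' : vtx K G w' ≠ 0)
    (hreg : ∀ x : LPA K G, vtx K G v * x * vtx K G v = x →
      ∃ b : LPA K G, x * (vtx K G v * b * vtx K G v) * x = x) : False := by
  classical
  set P : LPA K G := pe p with hP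
  set Pg : LPA K G := pg p with hPg
  set C : LPA K G := pe cyc with hC
  set V1 : LPA K G := vtx K G v with hV1
  set α : LPA K G := P * C * Pg with hα
  set n : ℤ := (cyc.length : ℤ) with hn
  have hn1 : 1 ≤ n := by rw [hn]; exact_mod_cast hlen
  have hva : V1 * α = α := by
    rw [hα, hV1, hP, ← mul_assoc, ← mul_assoc, vtx_mul_pe]
  have hav : α * V1 = α := by
    rw [hα, hV1, hPg, mul_assoc, pg_mul_vtx]
  set γ : LPA K G := V1 + α with hγ
  have hvγ : V1 * γ = γ := by rw [hγ, mul_add, hV1, vtx_idem, ← hV1, hva]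
  have hγv : γ * V1 = γ := by rw [hγ, add_mul, hV1, vtx_idem, ← hV1, hav]
  obtain ⟨b, hb⟩ := hreg γ (by rw [hvγ, hγv])
  set y : LPA K G := V1 * b * V1 with hy
  have hvy : V1 * y = y := by rw [hy, ← mul_assoc, ← mul_assoc, hV1, vtx_idem]
  have hyv : y * V1 = y := by rw [hy, mul_assoc, hV1, vtx_idem]
  -- Phi of the key elements
  have hPhiα : Phi K G α = sg K G n α := by
    rw [hα, map_mul, map_mul, hP, hPg, hC, Phi_pe, Phi_pe, Phi_pg]
    unfold sg
    rw [AddMonoidAlgebra.single_mul_single, AddMonoidAlgebra.single_mul_single]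
    congr 1
    rw [hn]
    ring
  have hPhiV : Phi K G V1 = sg K G 0 V1 := by rw [hV1, Phi_vtx]
  -- Step A : γ * y = V1
  have hstepA : γ * y = V1 := by
    set z : LPA K G := V1 - γ * y with hz
    have hzv : z * V1 = z := by
      rw [hz, sub_mul, hV1, vtx_idem, mul_assoc, ← hV1, hyv]
    have hzγ : z * γ = 0 := by
      rw [hz, sub_mul, hvγ, hb, sub_self]
    have hz0 : z = 0 := by
      by_contra hne
      have hrne : Phi K G z ≠ 0 := fun h => hne (Phi_eq_zero h)
      have h1 : Phi K G z * sg K G 0 V1 = Phi K G z := by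
        rw [← hPhiV, ← map_mul, hzv]
      have hrv : ∀ m : ℤ, (Phi K G z).coeff m * V1 = (Phi K G z).coeff m := by
        intro m
        have := DFunLike.congr_fun (congrArg AddMonoidAlgebra.coeff h1) m
        rwa [AddMonoidAlgebra.coeff_mul_single_apply, neg_zero, add_zero] at this
      have h2 : Phi K G z * (sg K G 0 V1 + sg K G n α) = 0 := by
        have h2a : Phi K G z * Phi K G γ = 0 := by rw [← map_mul, hzγ, map_zero]
        rwa [hγ, map_add, hPhiV, hPhiα] at h2a
      have hrec : ∀ m : ℤ, (Phi K G z).coeff m + (Phi K G z).coeff (m - n) * α = 0 := by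
        intro m
        have := DFunLike.congr_fun (congrArg AddMonoidAlgebra.coeff h2) m
        rw [mul_add, AddMonoidAlgebra.coeff_add, Finsupp.add_apply, AddMonoidAlgebra.coeff_mul_single_apply,
          AddMonoidAlgebra.coeff_mul_single_apply, neg_zero, add_zero, hrv, ← sub_eq_add_neg] at this
        simpa using this
      have hsupp : (Phi K G z).coeff.support.Nonempty := Finsupp.support_nonempty_iff.mpr (fun h => hrne (AddMonoidAlgebra.coeff_eq_zero.mp h))
      set m₀ := (Phi K G z).coeff.support.min' hsupp with hm₀
      have hmem : m₀ ∈ (Phi K G z).coeff.support := (Phi K G z).coeff.support.min'_mem hsupp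
      have hzero : (Phi K G z).coeff (m₀ - n) = 0 := by
        by_contra hc
        have : m₀ ≤ m₀ - n := Finset.min'_le _ _ (Finsupp.mem_support_iff.mpr hc)
        omega
      have := hrec m₀
      rw [hzero, zero_mul, add_zero] at this
      exact Finsupp.mem_support_iff.mp hmem this
    rw [hz, sub_eq_zero] at hz0
    exact hz0.symm
  -- Step B : coefficients of Phi y
  have hq1 : ∀ m : ℤ, V1 * (Phi K G y).coeff m = (Phi K G y).coeff m := by
    intro m
    have h1 : sg K G 0 V1 * Phi K G y = Phi K G y := by
      rw [← hPhiV, ← map_mul, hvy]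
    have := DFunLike.congr_fun (congrArg AddMonoidAlgebra.coeff h1) m
    rwa [AddMonoidAlgebra.coeff_single_mul_apply, neg_zero, zero_add] at this
  have hE : ∀ m : ℤ, (Phi K G y).coeff m + α * (Phi K G y).coeff (m - n)
      = if m = 0 then V1 else 0 := by
    intro m
    have h1 : (sg K G 0 V1 + sg K G n α) * Phi K G y = sg K G 0 V1 := by
      have h1a : Phi K G γ * Phi K G y = Phi K G V1 := by
        rw [← map_mul, hstepA]
      rwa [hγ, map_add, hPhiV, hPhiα] at h1a
    have h2 := DFunLike.congr_fun (congrArg AddMonoidAlgebra.coeff h1) m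
    rw [add_mul, AddMonoidAlgebra.coeff_add, Finsupp.add_apply, AddMonoidAlgebra.coeff_single_mul_apply,
      AddMonoidAlgebra.coeff_single_mul_apply, neg_zero, zero_add, hq1] at h2
    rw [show -n + m = m - n by ring] at h2
    rw [h2]
    unfold sg
    rw [AddMonoidAlgebra.coeff_single, Finsupp.single_apply]
    split_ifs with h3 h4 h4
    · rfl
    · exact absurd h3.symm h4
    · exact absurd h4.symm h3
    · rfl
  set q := Phi K G y with hq
  have hneg : ∀ m : ℤ, m < 0 → q.coeff m = 0 := by
    intro m hm
    by_contra hqm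
    have hSne : (q.coeff.support.filter (fun a => a < 0)).Nonempty :=
      ⟨m, Finset.mem_filter.mpr ⟨Finsupp.mem_support_iff.mpr hqm, hm⟩⟩
    have hmem := (q.coeff.support.filter (fun a => a < 0)).min'_mem hSne
    rw [Finset.mem_filter] at hmem
    set m₀ := (q.coeff.support.filter (fun a => a < 0)).min' hSne with hm₀
    have h0 : q.coeff (m₀ - n) = 0 := by
      by_contra hc
      have hin : m₀ - n ∈ q.coeff.support.filter (fun a => a < 0) := Finset.mem_filter.mpr
        ⟨Finsupp.mem_support_iff.mpr hc, by omega⟩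
      have := Finset.min'_le _ _ hin
      omega
    have := hE m₀
    rw [h0, mul_zero, add_zero, if_neg (by omega : ¬ m₀ = 0)] at this
    exact Finsupp.mem_support_iff.mp hmem.1 this
  have h0 : q.coeff 0 = V1 := by
    have := hE 0
    rw [hneg (0 - n) (by omega), mul_zero, add_zero, if_pos rfl] at this
    exact this
  -- powers of α
  have hαpow : ∀ k : ℕ, α ^ (k + 1) = P * C ^ (k + 1) * Pg := by
    intro k
    induction k with
    | zero => rw [pow_one, pow_one, hα]
    | succ k ih =>
        have hmid : Pg * (P * C * Pg) = C * Pg := by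
          rw [mul_assoc P C Pg, ← mul_assoc Pg P, hPg, hP, pg_mul_pe,
            ← mul_assoc, hC, vtx_mul_pe]
        calc α ^ (k + 2) = α ^ (k + 1) * α := by rw [pow_succ]
        _ = P * C ^ (k + 1) * (Pg * (P * C * Pg)) := by rw [ih, hα, mul_assoc]
        _ = P * C ^ (k + 1) * (C * Pg) := by rw [hmid]
        _ = P * (C ^ (k + 1) * C) * Pg := by
            rw [← mul_assoc, mul_assoc P (C ^ (k + 1)) C]
        _ = P * C ^ (k + 2) * Pg := by rw [← pow_succ]
  have hαk : ∀ k : ℕ, α ^ (k + 1) ≠ 0 := by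
    intro k hzero
    have h1 : Pg * α ^ (k + 1) * P = C ^ (k + 1) := by
      rw [hαpow k, ← mul_assoc Pg (P * C ^ (k + 1)) Pg, ← mul_assoc Pg P,
        hPg, hP, pg_mul_pe]
      rw [hC, vtx_mul_pe_pow]
      rw [mul_assoc, pg_mul_pe, pe_pow_mul_vtx]
    rw [hzero, mul_zero, zero_mul] at h1
    have h2 := pg_pow_mul_pe_pow (K := K) cyc k
    rw [← hC, ← h1, mul_zero] at h2
    exact hw' h2.symm
  -- the inductive nonvanishing of coefficients
  have hpow : ∀ k : ℕ, q.coeff (((k : ℤ) + 1) * n) = (-α) ^ (k + 1) := by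
    intro k
    induction k with
    | zero =>
        have h5 := hE n
        rw [if_neg (by omega : ¬ n = 0), sub_self, h0, hav] at h5
        have hqn : q.coeff n = -α := eq_neg_of_add_eq_zero_left h5
        rw [show (((0 : ℕ) : ℤ) + 1) * n = n by push_cast; ring, pow_one]
        exact hqn
    | succ k ih =>
        have h5 := hE (((k : ℤ) + 2) * n)
        have hpos : (0:ℤ) < ((k : ℤ) + 2) * n := mul_pos (by positivity) (by omega)
        rw [if_neg (ne_of_gt hpos)] at h5
        rw [show ((k : ℤ) + 2) * n - n = ((k : ℤ) + 1) * n by ring, ih] at h5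
        have hq2 : q.coeff (((k : ℤ) + 2) * n) = -(α * (-α) ^ (k + 1)) :=
          eq_neg_of_add_eq_zero_left h5
        rw [show (((k + 1 : ℕ) : ℤ)) + 1 = ((k : ℤ) + 2) by push_cast; ring, hq2,
          pow_succ' (-α) (k + 1), neg_mul α]
  -- infinitude of the support
  have hmemsupp : ∀ k : ℕ, ((k : ℤ) + 1) * n ∈ q.coeff.support := by
    intro k
    rw [Finsupp.mem_support_iff, hpow k]
    intro hcon
    apply hαk k
    have h7 : α ^ (k + 1) = (-1 : LPA K G) ^ (k + 1) * (-α) ^ (k + 1) := by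
      conv_lhs => rw [show α = -(-α) from (neg_neg α).symm]
      rw [neg_pow (-α) (k + 1)]
    rw [h7, hcon, mul_zero]
  have hinj : Function.Injective (fun k : ℕ => ((k : ℤ) + 1) * n) := by
    intro a b hab
    simp only at hab
    have := mul_right_cancel₀ (by omega : n ≠ 0) hab
    omega
  have hinf : (↑q.coeff.support : Set ℤ).Infinite :=
    Set.infinite_of_injective_forall_mem hinj (fun k => hmemsupp k)
  exact hinf q.coeff.support.finite_toSet

end Stmt13

end Stmt13Aux

/-- If the corner `vLv` of the Leavitt path algebra `L = L_K(E)` is von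
Neumann regular (every `x ∈ vLv` has a quasi-inverse inside the corner), then the tree
`T_E(v)` contains no cycles. -/
theorem stmt13 (K : Type) [Field K] (G : DGraph) (v : G.V)
    (hreg : ∀ x : LPA K G, lpaVtx K G v * x * lpaVtx K G v = x →
      ∃ b : LPA K G, x * (lpaVtx K G v * b * lpaVtx K G v) * x = x) :
    ¬ ∃ (c : List G.E) (w : G.V), G.IsCycle c ∧ w ∈ c.map G.src ∧ G.Reaches v w := by
  rintro ⟨c, w, ⟨hne, hch, hcl, -⟩, hw, hreach⟩
  obtain ⟨w', ⟨cyc, hlen⟩, ⟨x, hx⟩, hww'⟩ := Stmt13.cycle_package c hne hch hcl w hw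
  obtain ⟨p⟩ := Stmt13.reaches_nonempty_path (hreach.trans hww')
  refine Stmt13.main_contra (K := K) p cyc hlen (Stmt13.vtx_ne_zero w' x hx) ?_
  intro xx hxx
  obtain ⟨b, hb⟩ := hreg xx (by rw [Stmt13.lpaVtx_eq]; exact hxx)
  rw [Stmt13.lpaVtx_eq] at hb
  exact ⟨b, hb⟩
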